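/- Let (g, [·,·], δ_g) be a Lie bialgebra and E a vector space containing g, with a Lie bialgebra structure on E such that g is a Lie sub-bialgebra and g is an ideal of the Lie algebra E. Then E is isomorphic (via an isomorphism restricting to the identity on g) to a crossed bi-product g ◊_{⊳,f}^{Δ_E,Δ_V} V for some complement V of g in E, i.e. to a unified bi-product in which the action ⊲ : V×g → V is trivial. -/

import Mathlib

open TensorProduct LinearMap

noncomputable section

/-- The flip `A ⊗ B → B ⊗ A`. -/
def flipT (k A B : Type*) [Field k] [AddCommGroup A] [Module k A]
    [AddCommGroup B] [Module k B] : A ⊗[k] B →ₗ[k] B ⊗[k] A :=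
  (TensorProduct.comm k A B).toLinearMap

/-- Swap of the first two tensor factors `A ⊗ (B ⊗ C) → B ⊗ (A ⊗ C)`. -/
def swap12 (k A B C : Type*) [Field k] [AddCommGroup A] [Module k A]
    [AddCommGroup B] [Module k B] [AddCommGroup C] [Module k C] :
    A ⊗[k] (B ⊗[k] C) →ₗ[k] B ⊗[k] (A ⊗[k] C) :=
  (TensorProduct.assoc k B A C).toLinearMap ∘ₗ
    rTensor C (flipT k A B) ∘ₗ (TensorProduct.assoc k A B C).symm.toLinearMap

/-- Associator as a linear map. -/
def asr (k A B C : Type*) [Field k] [AddCommGroup A] [Module k A]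
    [AddCommGroup B] [Module k B] [AddCommGroup C] [Module k C] :
    (A ⊗[k] B) ⊗[k] C →ₗ[k] A ⊗[k] (B ⊗[k] C) :=
  (TensorProduct.assoc k A B C).toLinearMap

/-- `δ : M → M ⊗ M` is a Lie coalgebra structure: anti-cocommutativity and co-Jacobi. -/
def IsLieCoalgebra {k M : Type*} [Field k] [AddCommGroup M] [Module k M]
    (δ : M →ₗ[k] M ⊗[k] M) : Prop :=
  (∀ m, flipT k M M (δ m) = - δ m) ∧
  (∀ m, lTensor M δ (δ m) - swap12 k M M M (lTensor M δ (δ m)) =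
      asr k M M M (rTensor M δ (δ m)))

/-- A (bilinear) map `b` is a Lie bracket: alternating and Jacobi (in Leibniz form). -/
def IsLieBracket {k L : Type*} [Field k] [AddCommGroup L] [Module k L]
    (b : L →ₗ[k] L →ₗ[k] L) : Prop :=
  (∀ a, b a a = 0) ∧ (∀ a c d, b a (b c d) = b (b a c) d + b c (b a d))

/-- The adjoint action of `a` on `L ⊗ L`: `a.(Σ b₁⊗b₂) = Σ [a,b₁]⊗b₂ + b₁⊗[a,b₂]`. -/
def adT {k L : Type*} [Field k] [AddCommGroup L] [Module k L]
    (b : L →ₗ[k] L →ₗ[k] L) (a : L) : L ⊗[k] L →ₗ[k] L ⊗[k] L :=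
  rTensor L (b a) + lTensor L (b a)

/-- `(L, b, δ)` is a Lie bialgebra. -/
def IsLieBialgebra {k L : Type*} [Field k] [AddCommGroup L] [Module k L]
    (b : L →ₗ[k] L →ₗ[k] L) (δ : L →ₗ[k] L ⊗[k] L) : Prop :=
  IsLieBracket b ∧ IsLieCoalgebra δ ∧
    ∀ a c, δ (b a c) = adT b a (δ c) - adT b c (δ a)

variable {k g V : Type*} [Field k] [CharZero k]
  [AddCommGroup g] [Module k g] [AddCommGroup V] [Module k V]

/-- The unified co-product map on `E = g ⊕ V`:
`δ_E(a + x) = δ_g(a) + Δ_E(x) − τΔ_E(x) + Δ_V(x) + δ_V(x)`. -/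
def uniCoprod (δg : g →ₗ[k] g ⊗[k] g) (ΔE : V →ₗ[k] g ⊗[k] V)
    (ΔV : V →ₗ[k] g ⊗[k] g) (δV : V →ₗ[k] V ⊗[k] V) :
    (g × V) →ₗ[k] (g × V) ⊗[k] (g × V) :=
  map (inl k g V) (inl k g V) ∘ₗ δg ∘ₗ fst k g V +
    (map (inl k g V) (inr k g V) ∘ₗ ΔE
      - map (inr k g V) (inl k g V) ∘ₗ flipT k g V ∘ₗ ΔE
      + map (inl k g V) (inl k g V) ∘ₗ ΔV
      + map (inr k g V) (inr k g V) ∘ₗ δV) ∘ₗ snd k g V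

/-- Conditions (CLE1)–(CLE5): `(Δ_E, Δ_V, δ_V)` is a Lie coalgebraic extending
structure of `(g, δ_g)` by `V`. -/
def IsCoalgExtStructure (δg : g →ₗ[k] g ⊗[k] g) (ΔE : V →ₗ[k] g ⊗[k] V)
    (ΔV : V →ₗ[k] g ⊗[k] g) (δV : V →ₗ[k] V ⊗[k] V) : Prop :=
  -- (CLE1)
  (∀ x, flipT k g g (ΔV x) = - ΔV x) ∧ (∀ x, flipT k V V (δV x) = - δV x) ∧
  -- (CLE2)
  (∀ x, lTensor g ΔV (ΔE x) + lTensor g δg (ΔV x)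
      - swap12 k g g g (lTensor g ΔV (ΔE x)) - swap12 k g g g (lTensor g δg (ΔV x)) =
      - asr k g g g (rTensor g ΔV (flipT k g V (ΔE x)))
      + asr k g g g (rTensor g δg (ΔV x))) ∧
  -- (CLE3)
  (∀ x, lTensor g ΔE (ΔE x) - swap12 k g g V (lTensor g ΔE (ΔE x)) =
      asr k g g V (rTensor V δg (ΔE x)) + asr k g g V (rTensor V ΔV (δV x))) ∧
  -- (CLE4)
  (∀ x, lTensor g δV (ΔE x) - swap12 k V g V (lTensor V ΔE (δV x)) =
      asr k g V V (rTensor V ΔE (δV x))) ∧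
  -- (CLE5)
  (∀ x, lTensor V δV (δV x) - swap12 k V V V (lTensor V δV (δV x)) =
      asr k V V V (rTensor V δV (δV x)))

end
noncomputable section
variable {k g V : Type*} [Field k] [CharZero k]
  [AddCommGroup g] [Module k g] [AddCommGroup V] [Module k V]

/-- The unified product bracket on `E = g ⊕ V`:
`[a+x, b+y] = [a,b] + x⊳b − y⊳a + f(x,y) + x⊲b − y⊲a + {x,y}`. -/
def uniBracket (gbr : g →ₗ[k] g →ₗ[k] g) (lhd : V →ₗ[k] g →ₗ[k] V)
    (rhd : V →ₗ[k] g →ₗ[k] g) (f : V →ₗ[k] V →ₗ[k] g)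
    (br : V →ₗ[k] V →ₗ[k] V) : (g × V) →ₗ[k] (g × V) →ₗ[k] (g × V) :=
  LinearMap.mk₂ k
    (fun u v => (gbr u.1 v.1 + rhd u.2 v.1 - rhd v.2 u.1 + f u.2 v.2,
                 lhd u.2 v.1 - lhd v.2 u.1 + br u.2 v.2))
    (by intro m₁ m₂ n; simp [Prod.ext_iff]; constructor <;> abel)
    (by intro c m n; simp [Prod.ext_iff, smul_add, smul_sub])
    (by intro m n₁ n₂; simp [Prod.ext_iff]; constructor <;> abel)
    (by intro c m n; simp [Prod.ext_iff, smul_add, smul_sub])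

/-- Conditions (LE1)–(LE7): `(⊲, ⊳, f, {·,·})` is a Lie extending structure
of the Lie algebra `(g, [·,·])` by `V` (Agore–Militaru). -/
def IsLieExtStructure (gbr : g →ₗ[k] g →ₗ[k] g) (lhd : V →ₗ[k] g →ₗ[k] V)
    (rhd : V →ₗ[k] g →ₗ[k] g) (f : V →ₗ[k] V →ₗ[k] g)
    (br : V →ₗ[k] V →ₗ[k] V) : Prop :=
  -- (LE1)
  (∀ x, f x x = 0) ∧ (∀ x, br x x = 0) ∧
  -- (LE2) : (V, ⊲) is a right g-module
  (∀ x a b, lhd x (gbr a b) = lhd (lhd x a) b - lhd (lhd x b) a) ∧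
  -- (LE3)
  (∀ x a b, rhd x (gbr a b) = gbr (rhd x a) b + gbr a (rhd x b)
      + rhd (lhd x a) b - rhd (lhd x b) a) ∧
  -- (LE4)
  (∀ x y a, lhd (br x y) a = br x (lhd y a) + br (lhd x a) y
      + lhd x (rhd y a) - lhd y (rhd x a)) ∧
  -- (LE5)
  (∀ x y a, rhd (br x y) a = rhd x (rhd y a) - rhd y (rhd x a)
      + gbr a (f x y) + f x (lhd y a) + f (lhd x a) y) ∧
  -- (LE6)
  (∀ x y z, f x (br y z) + f y (br z x) + f z (br x y)
      + rhd x (f y z) + rhd y (f z x) + rhd z (f x y) = 0) ∧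
  -- (LE7)
  (∀ x y z, br x (br y z) + br y (br z x) + br z (br x y)
      + lhd x (f y z) + lhd y (f z x) + lhd z (f x y) = 0)

/-- Conditions (BE2)–(BE7): compatibility between the Lie extending structure
and the Lie coalgebraic extending structure. -/
def BEConditions (gbr : g →ₗ[k] g →ₗ[k] g) (δg : g →ₗ[k] g ⊗[k] g)
    (lhd : V →ₗ[k] g →ₗ[k] V) (rhd : V →ₗ[k] g →ₗ[k] g)
    (f : V →ₗ[k] V →ₗ[k] g) (br : V →ₗ[k] V →ₗ[k] V)
    (ΔE : V →ₗ[k] g ⊗[k] V) (ΔV : V →ₗ[k] g ⊗[k] g)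
    (δV : V →ₗ[k] V ⊗[k] V) : Prop :=
  -- (BE2)
  (∀ a x, - ΔV (lhd x a) - δg (rhd x a) =
      flipT k g g (lTensor g (rhd.flip a) (ΔE x)) - lTensor g (rhd.flip a) (ΔE x)
      + adT gbr a (ΔV x)
      - (rTensor g (rhd x) (δg a) + lTensor g (rhd x) (δg a))) ∧
  -- (BE3)
  (∀ a x, ΔE (lhd x a) =
      - rTensor V (gbr a) (ΔE x) + lTensor g (lhd.flip a) (ΔE x)
      + rTensor V (rhd.flip a) (δV x) + lTensor g (lhd x) (δg a)) ∧
  -- (BE4)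
  (∀ a x, δV (lhd x a) =
      lTensor V (lhd.flip a) (δV x) + rTensor V (lhd.flip a) (δV x)) ∧
  -- (BE5)
  (∀ x y, δg (f x y) + ΔV (br x y) =
      (lTensor g (f x) (ΔE y) - flipT k g g (lTensor g (f x) (ΔE y)))
      + (rTensor g (rhd x) (ΔV y) + lTensor g (rhd x) (ΔV y))
      - (lTensor g (f y) (ΔE x) - flipT k g g (lTensor g (f y) (ΔE x)))
      - (rTensor g (rhd y) (ΔV x) + lTensor g (rhd y) (ΔV x))) ∧
  -- (BE6)
  (∀ x y, ΔE (br x y) =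
      (rTensor V (rhd x) (ΔE y) + lTensor g (br x) (ΔE y))
      + lTensor g (lhd x) (ΔV y) + rTensor V (f x) (δV y)
      - (rTensor V (rhd y) (ΔE x) + lTensor g (br y) (ΔE x))
      - lTensor g (lhd y) (ΔV x) - rTensor V (f y) (δV x)) ∧
  -- (BE7)
  (∀ x y, δV (br x y) =
      (rTensor V (lhd x) (ΔE y) - flipT k V V (rTensor V (lhd x) (ΔE y)))
      + (rTensor V (br x) (δV y) + lTensor V (br x) (δV y))
      - (rTensor V (lhd y) (ΔE x) - flipT k V V (rTensor V (lhd y) (ΔE x)))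
      - (rTensor V (br y) (δV x) + lTensor V (br y) (δV x)))

end
noncomputable section
variable {k g V : Type*} [Field k] [CharZero k]
  [AddCommGroup g] [Module k g] [AddCommGroup V] [Module k V]


/-- Auxiliary: the flip intertwines `map f h`. -/
private lemma flipT_map_aux {k A B C D : Type*} [Field k] [AddCommGroup A] [Module k A]
    [AddCommGroup B] [Module k B] [AddCommGroup C] [Module k C]
    [AddCommGroup D] [Module k D] (f : A →ₗ[k] C) (h : B →ₗ[k] D) (t : A ⊗[k] B) :
    flipT k C D (map f h t) = map h f (flipT k A B t) := by
  induction t with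
  | zero => simp
  | tmul a b => simp [flipT]
  | add x y hx hy => simp [map_add, hx, hy]

/-- Auxiliary: decomposition of a tensor over a product. -/
private lemma tensor_decomp_aux {k g V : Type*} [Field k] [AddCommGroup g] [Module k g]
    [AddCommGroup V] [Module k V] (t : (g × V) ⊗[k] (g × V)) :
    map (inl k g V ∘ₗ fst k g V) (inl k g V ∘ₗ fst k g V) t
      + map (inl k g V ∘ₗ fst k g V) (inr k g V ∘ₗ snd k g V) t
      + map (inr k g V ∘ₗ snd k g V) (inl k g V ∘ₗ fst k g V) t
      + map (inr k g V ∘ₗ snd k g V) (inr k g V ∘ₗ snd k g V) t = t := by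
  have hid : inl k g V ∘ₗ fst k g V + inr k g V ∘ₗ snd k g V = LinearMap.id := by
    apply LinearMap.ext; intro p; simp [Prod.ext_iff]
  have h : (map (inl k g V ∘ₗ fst k g V + inr k g V ∘ₗ snd k g V)
      (inl k g V ∘ₗ fst k g V + inr k g V ∘ₗ snd k g V) :
      (g × V) ⊗[k] (g × V) →ₗ[k] (g × V) ⊗[k] (g × V)) =
      map (inl k g V ∘ₗ fst k g V) (inl k g V ∘ₗ fst k g V)
      + map (inl k g V ∘ₗ fst k g V) (inr k g V ∘ₗ snd k g V)
      + map (inr k g V ∘ₗ snd k g V) (inl k g V ∘ₗ fst k g V)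
      + map (inr k g V ∘ₗ snd k g V) (inr k g V ∘ₗ snd k g V) := by
    rw [TensorProduct.map_add_left, TensorProduct.map_add_right,
      TensorProduct.map_add_right]
    abel
  have h2 := congrArg (fun φ : (g × V) ⊗[k] (g × V) →ₗ[k] (g × V) ⊗[k] (g × V) => φ t) h
  simpa [hid, TensorProduct.map_id] using h2.symm

/-- **Proposition (crossed bi-product).** Any Lie bialgebra structure on
`E = g ⊕ V` containing `(g,[·,·],δ_g)` as a Lie sub-bialgebra and such that `g`
is an ideal of the Lie algebra `E` is isomorphic (via an isomorphism restricting
to the identity on `g`, here the identity of `g ⊕ V`) to a crossed bi-product,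
i.e. a unified bi-product with trivial action `⊲ = 0`. -/
theorem crossed_biproduct_of_ideal (gbr : g →ₗ[k] g →ₗ[k] g)
    (δg : g →ₗ[k] g ⊗[k] g) (hg : IsLieBialgebra gbr δg)
    (brE : (g × V) →ₗ[k] (g × V) →ₗ[k] (g × V))
    (δE : (g × V) →ₗ[k] (g × V) ⊗[k] (g × V))
    (hE : IsLieBialgebra brE δE)
    (hgbr : ∀ a b : g, brE (inl k g V a) (inl k g V b) = inl k g V (gbr a b))
    (hgδ : ∀ a : g, δE (inl k g V a) = map (inl k g V) (inl k g V) (δg a))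
    (hideal : ∀ (e : g × V) (a : g), (brE e (inl k g V a)).2 = 0) :
    ∃ (rhd : V →ₗ[k] g →ₗ[k] g) (f : V →ₗ[k] V →ₗ[k] g)
      (br : V →ₗ[k] V →ₗ[k] V) (ΔE : V →ₗ[k] g ⊗[k] V)
      (ΔV : V →ₗ[k] g ⊗[k] g) (δV : V →ₗ[k] V ⊗[k] V),
      uniBracket gbr 0 rhd f br = brE ∧ uniCoprod δg ΔE ΔV δV = δE := by
  classical
  -- antisymmetry of brE
  have hanti : ∀ u v : g × V, brE u v = - brE v u := by
    intro u v
    have h := hE.1.1 (u + v)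
    simp only [map_add, LinearMap.add_apply, hE.1.1 u, hE.1.1 v, zero_add, add_zero] at h
    have h2 : brE u v + brE v u = 0 := by linear_combination (norm := abel) h
    exact eq_neg_of_add_eq_zero_left h2
  refine ⟨((brE.comp (inr k g V)).compl₂ (inl k g V)).compr₂ (fst k g V),
    ((brE.comp (inr k g V)).compl₂ (inr k g V)).compr₂ (fst k g V),
    ((brE.comp (inr k g V)).compl₂ (inr k g V)).compr₂ (snd k g V),
    (map (fst k g V) (snd k g V)).comp (δE.comp (inr k g V)),
    (map (fst k g V) (fst k g V)).comp (δE.comp (inr k g V)),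
    (map (snd k g V) (snd k g V)).comp (δE.comp (inr k g V)), ?_, ?_⟩
  · -- brackets agree
    apply LinearMap.ext; intro u; apply LinearMap.ext; intro v
    have hsplit : ∀ w : g × V, w = inl k g V w.1 + inr k g V w.2 := by
      intro w; ext <;> simp
    conv_rhs => rw [hsplit u, hsplit v]
    simp only [map_add, LinearMap.add_apply]
    rw [hgbr, hanti (inl k g V u.1) (inr k g V v.2)]
    refine Prod.ext ?_ ?_
    · simp only [uniBracket, mk₂_apply, compr₂_apply, compl₂_apply, comp_apply,
        Prod.fst_add, Prod.fst_neg, inl_apply, fst_apply, snd_apply, LinearMap.zero_apply]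
      abel
    · have hid1 : ((brE ((inr k g V) u.2)) (v.1, (0 : V))).2 = 0 := hideal _ v.1
      have hid2 : ((brE ((inr k g V) v.2)) (u.1, (0 : V))).2 = 0 := hideal _ u.1
      simp only [uniBracket, mk₂_apply, compr₂_apply, compl₂_apply, comp_apply,
        Prod.snd_add, Prod.snd_neg, inl_apply, fst_apply, snd_apply, LinearMap.zero_apply,
        hid1, hid2]
      abel
  · -- coproducts agree
    apply LinearMap.ext; intro u
    have hsplit : u = inl k g V u.1 + inr k g V u.2 := by ext <;> simp
    have hflip : flipT k (g × V) (g × V) (δE (inr k g V u.2)) = - δE (inr k g V u.2) :=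
      hE.2.1.1 _
    have hRHS : δE u = map (inl k g V) (inl k g V) (δg u.1) + δE (inr k g V u.2) := by
      conv_lhs => rw [hsplit]
      rw [map_add, hgδ]
    rw [hRHS]
    set t := δE (inr k g V u.2) with ht
    simp only [uniCoprod, LinearMap.add_apply, LinearMap.sub_apply, comp_apply, fst_apply, snd_apply]
    congr 1
    have e1 : map (inl k g V) (inr k g V) (map (fst k g V) (snd k g V) t)
        = map (inl k g V ∘ₗ fst k g V) (inr k g V ∘ₗ snd k g V) t := by
      rw [TensorProduct.map_comp]; rfl
    have e2 : map (inl k g V) (inl k g V) (map (fst k g V) (fst k g V) t)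
        = map (inl k g V ∘ₗ fst k g V) (inl k g V ∘ₗ fst k g V) t := by
      rw [TensorProduct.map_comp]; rfl
    have e3 : map (inr k g V) (inr k g V) (map (snd k g V) (snd k g V) t)
        = map (inr k g V ∘ₗ snd k g V) (inr k g V ∘ₗ snd k g V) t := by
      rw [TensorProduct.map_comp]; rfl
    have e4 : map (inr k g V) (inl k g V)
          (flipT k g V (map (fst k g V) (snd k g V) t))
        = - map (inr k g V ∘ₗ snd k g V) (inl k g V ∘ₗ fst k g V) t := by
      rw [flipT_map_aux, hflip, map_neg, map_neg, neg_inj,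
        TensorProduct.map_comp, comp_apply]
    rw [e1, e2, e3, e4]
    have := tensor_decomp_aux (k := k) (g := g) (V := V) t
    linear_combination (norm := abel) this

end
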